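/- Let K be a positive semidefinite n×n complex matrix with Tr(K) = 1 (a density matrix), and let H be a Hermitian n×n complex matrix. Define S(K) = ∑_l η(λ_l(K)), where λ_l(K) are the eigenvalues of K with multiplicity and η(t) = −t log t (η(0) = 0). Then S(K) − Re(Tr(K·H)) ≤ log Tr(exp(−H)), where exp is the matrix exponential and Tr(exp(−H)) is a positive real number. -/

import Mathlib

open scoped ComplexOrder

/-- The entropy function `η(t) = −t log t` (with `η(0) = 0`). -/
noncomputable def eta (t : ℝ) : ℝ := -(t * Real.log t)

/-- The von Neumann entropy `S(K) = ∑_l η(λ_l(K))` of a Hermitian matrix `K`, where the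
`λ_l(K)` are the eigenvalues with multiplicity (junk value `0` for non-Hermitian matrices). -/
noncomputable def vnEntropy {n : Type*} [Fintype n] [DecidableEq n] (K : Matrix n n ℂ) : ℝ :=
  if hK : K.IsHermitian then ∑ i, eta (hK.eigenvalues i) else 0

/-- Gibbs' inequality. -/
lemma gibbs {n : Type*} [Fintype n] (x lam : n → ℝ) (hx : ∀ i, 0 < x i)
    (hlam : ∀ i, 0 ≤ lam i) (hsum : ∑ i, lam i = 1) :
    ∑ i, (eta (lam i) + lam i * Real.log (x i)) ≤ Real.log (∑ i, x i) := by
  classical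
  set T : Finset n := Finset.univ.filter (fun i => lam i ≠ 0) with hT
  have hsumT : ∑ i ∈ T, lam i = 1 := by
    rw [← hsum]
    exact Finset.sum_filter_ne_zero _
  have hTne : T.Nonempty := by
    rcases T.eq_empty_or_nonempty with h | h
    · rw [h, Finset.sum_empty] at hsumT; norm_num at hsumT
    · exact h
  have h1 : ∑ i, (eta (lam i) + lam i * Real.log (x i))
      = ∑ i ∈ T, lam i * Real.log (x i / lam i) := by
    rw [← Finset.sum_subset (Finset.subset_univ T)
      (fun i _ hi => by
        have : lam i = 0 := by
          by_contra h
          exact hi (Finset.mem_filter.mpr ⟨Finset.mem_univ i, h⟩)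
        simp [eta, this])]
    apply Finset.sum_congr rfl
    intro i hi
    have hlne : lam i ≠ 0 := (Finset.mem_filter.mp hi).2
    rw [Real.log_div (ne_of_gt (hx i)) hlne, eta]
    ring
  have h2 : ∑ i ∈ T, lam i * Real.log (x i / lam i)
      ≤ Real.log (∑ i ∈ T, lam i * (x i / lam i)) := by
    have := (strictConcaveOn_log_Ioi.concaveOn).le_map_sum (t := T)
      (w := lam) (p := fun i => x i / lam i)
      (fun i _ => hlam i) hsumT ?_
    · simpa [smul_eq_mul] using this
    · intro i hi
      have hlne : lam i ≠ 0 := (Finset.mem_filter.mp hi).2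
      exact Set.mem_Ioi.mpr (div_pos (hx i) (lt_of_le_of_ne (hlam i) (Ne.symm hlne)))
  have h3 : ∑ i ∈ T, lam i * (x i / lam i) = ∑ i ∈ T, x i := by
    apply Finset.sum_congr rfl
    intro i hi
    have hlne : lam i ≠ 0 := (Finset.mem_filter.mp hi).2
    field_simp
  have h4 : Real.log (∑ i ∈ T, x i) ≤ Real.log (∑ i, x i) := by
    apply Real.log_le_log (Finset.sum_pos (fun i _ => hx i) hTne)
    exact Finset.sum_le_sum_of_subset_of_nonneg (Finset.subset_univ T)
      (fun i _ _ => (hx i).le)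
  rw [h1]
  calc _ ≤ _ := h2
    _ = Real.log (∑ i ∈ T, x i) := by rw [h3]
    _ ≤ _ := h4

/-- The inequality part of the finite-dimensional variational principle (11.1):
for a density matrix `K` and Hermitian `H`, `S(K) − Tr(K·H) ≤ log Tr(e^{−H})`. -/
theorem variational_principle_inequality {n : Type*} [Fintype n] [DecidableEq n]
    (K H : Matrix n n ℂ) (hK : K.PosSemidef) (htr : K.trace = 1) (hH : H.IsHermitian) :
    vnEntropy K - ((K * H).trace).re ≤ Real.log (((NormedSpace.exp (-H)).trace).re) := by
  classical
  have hKh : K.IsHermitian := hK.1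
  set lam : n → ℝ := hKh.eigenvalues with hlam
  set mu : n → ℝ := hH.eigenvalues with hmu
  set V0 := hKh.eigenvectorUnitary with hV0
  set U0 := hH.eigenvectorUnitary with hU0
  set V : Matrix n n ℂ := ↑V0 with hV
  set U : Matrix n n ℂ := ↑U0 with hU
  set W : Matrix n n ℂ := star V * U with hWdef
  have hWmem : W ∈ Matrix.unitaryGroup n ℂ := mul_mem (Unitary.star_mem V0.2) U0.2
  set P : n → n → ℝ := fun i j => Complex.normSq (W i j) with hP
  set h : n → ℝ := fun i => ∑ j, P i j * mu j with hh
  have hVV : star V * V = 1 := V0.2.1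
  have hVV' : V * star V = 1 := V0.2.2
  have hUU : star U * U = 1 := U0.2.1
  -- row sums of P
  have hrow : ∀ i, ∑ j, P i j = 1 := by
    intro i
    have h1 : (W * star W) i i = 1 := by rw [hWmem.2]; simp
    have h2 : (W * star W) i i = ∑ j, ((P i j : ℝ) : ℂ) := by
      simp [Matrix.mul_apply, Matrix.star_apply, Complex.mul_conj, hP]
    rw [h2] at h1
    exact_mod_cast h1
  have hcol : ∀ j, ∑ i, P i j = 1 := by
    intro j
    have h1 : (star W * W) j j = 1 := by rw [hWmem.1]; simp
    have h2 : (star W * W) j j = ∑ i, ((P i j : ℝ) : ℂ) := by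
      simp [Matrix.mul_apply, Matrix.star_apply, mul_comm, Complex.mul_conj, hP]
    rw [h2] at h1
    exact_mod_cast h1
  have hPnn : ∀ i j, 0 ≤ P i j := fun i j => Complex.normSq_nonneg _
  have hlamnn : ∀ i, 0 ≤ lam i := fun i => hK.eigenvalues_nonneg i
  -- spectral theorems
  have hKspec : K = V * Matrix.diagonal (RCLike.ofReal ∘ lam) * star V := hKh.spectral_theorem
  have hHspec : H = U * Matrix.diagonal (RCLike.ofReal ∘ mu) * star U := hH.spectral_theorem
  -- sum of eigenvalues of K is 1
  have hsum : ∑ i, lam i = 1 := by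
    have h1 : K.trace = ∑ i, ((lam i : ℝ) : ℂ) := by
      rw [hKspec, Matrix.trace_mul_cycle]
      rw [hVV, one_mul, Matrix.trace_diagonal]
      rfl
    rw [htr] at h1
    exact_mod_cast h1.symm
  have hne : Nonempty n := by
    by_contra hcon
    have : IsEmpty n := not_nonempty_iff.mp hcon
    simp [Finset.univ_eq_empty] at hsum
  -- Step A: compute Re Tr(K·H)
  have e1 : K * H = V * (Matrix.diagonal (RCLike.ofReal ∘ lam) *
      (W * Matrix.diagonal (RCLike.ofReal ∘ mu) * star W)) * star V := by
    rw [hKspec, hHspec]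
    simp only [hWdef, star_mul, star_star, Matrix.mul_assoc, hVV', Matrix.mul_one]
  have e3 : (K * H).trace = (Matrix.diagonal (RCLike.ofReal ∘ lam) *
      (W * Matrix.diagonal (RCLike.ofReal ∘ mu) * star W)).trace := by
    rw [e1, Matrix.trace_mul_cycle, ← Matrix.mul_assoc, hVV, one_mul]
  have hKHre : ((K * H).trace).re = ∑ i, lam i * h i := by
    have e4 : (Matrix.diagonal (RCLike.ofReal ∘ lam) *
        (W * Matrix.diagonal (RCLike.ofReal ∘ mu) * star W)).trace
        = ∑ i, ∑ j, ((lam i * (P i j * mu j) : ℝ) : ℂ) := by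
      rw [Matrix.trace]
      apply Finset.sum_congr rfl
      intro i _
      rw [Matrix.diag_apply, Matrix.diagonal_mul, Matrix.mul_apply, Finset.mul_sum]
      apply Finset.sum_congr rfl
      intro j _
      rw [Matrix.mul_diagonal, Matrix.star_apply]
      have hc : W i j * star (W i j) = ((P i j : ℝ) : ℂ) := by
        rw [hP, Complex.star_def, Complex.mul_conj]
      rw [show ((lam i * (P i j * mu j) : ℝ) : ℂ)
          = ((lam i : ℝ) : ℂ) * ((P i j : ℝ) : ℂ) * ((mu j : ℝ) : ℂ) from by push_cast; ring,
        ← hc]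
      simp only [Function.comp_apply]
      have h1 : (RCLike.ofReal (lam i) : ℂ) = ((lam i : ℝ) : ℂ) := rfl
      have h2 : (RCLike.ofReal (mu j) : ℂ) = ((mu j : ℝ) : ℂ) := rfl
      rw [h1, h2]
      ring
    rw [e3, e4, Complex.re_sum]
    apply Finset.sum_congr rfl
    intro i _
    rw [Complex.re_sum, hh]
    simp only [Complex.ofReal_re]
    rw [Finset.mul_sum]
  -- Step B: trace of exp(-H)
  have hcoe : ((Unitary.toUnits U0 : (Matrix n n ℂ)ˣ) : Matrix n n ℂ) = U := rfl
  have hcoeinv : (((Unitary.toUnits U0)⁻¹ : (Matrix n n ℂ)ˣ) : Matrix n n ℂ) = star U := rfl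
  have hneg : -H = U * Matrix.diagonal (fun j => ((-mu j : ℝ) : ℂ)) * star U := by
    conv_lhs => rw [hHspec]
    have hd : Matrix.diagonal (fun j => ((-mu j : ℝ) : ℂ))
        = -Matrix.diagonal (RCLike.ofReal ∘ mu) := by
      ext i j
      simp only [Matrix.diagonal_apply, Matrix.neg_apply]
      split <;> simp
    rw [hd, Matrix.mul_neg, Matrix.neg_mul]
  have hexp : NormedSpace.exp (-H)
      = U * Matrix.diagonal (fun j => ((Real.exp (-mu j) : ℝ) : ℂ)) * star U := by
    rw [hneg, ← hcoeinv, ← hcoe, Matrix.exp_units_conj, hcoe, hcoeinv, Matrix.exp_diagonal,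
      Pi.exp_def]
    rw [show (fun i => NormedSpace.exp ((-mu i : ℝ) : ℂ)) = fun j => ((Real.exp (-mu j) : ℝ) : ℂ)
      from funext fun j => by rw [← Complex.exp_eq_exp_ℂ, ← Complex.ofReal_exp]]
  have hZre : ((NormedSpace.exp (-H)).trace).re = ∑ j, Real.exp (-mu j) := by
    rw [hexp, Matrix.trace_mul_cycle, hUU, one_mul, Matrix.trace_diagonal, Complex.re_sum]
    exact Finset.sum_congr rfl fun j _ => Complex.ofReal_re _
  -- Step C: Jensen (Peierls–Bogoliubov)
  have hC : ∑ i, Real.exp (-h i) ≤ ∑ j, Real.exp (-mu j) := by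
    have key : ∀ i, Real.exp (-h i) ≤ ∑ j, P i j * Real.exp (-mu j) := by
      intro i
      have hs : ∑ j, P i j • (-mu j) = -h i := by
        rw [hh, ← Finset.sum_neg_distrib]
        apply Finset.sum_congr rfl
        intro j _
        simp only [smul_eq_mul]
        ring
      have := convexOn_exp.map_sum_le (t := Finset.univ) (w := P i) (p := fun j => -mu j)
        (fun j _ => hPnn i j) (hrow i) (fun j _ => Set.mem_univ _)
      rw [hs] at this
      simpa [smul_eq_mul] using this
    calc ∑ i, Real.exp (-h i) ≤ ∑ i, ∑ j, P i j * Real.exp (-mu j) :=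
          Finset.sum_le_sum (fun i _ => key i)
      _ = ∑ j, (∑ i, P i j) * Real.exp (-mu j) := by
          rw [Finset.sum_comm]
          simp [Finset.sum_mul]
      _ = ∑ j, Real.exp (-mu j) := by simp [hcol]
  -- Assembly
  have hvn : vnEntropy K = ∑ i, eta (lam i) := by
    rw [vnEntropy, dif_pos hKh]
  rw [hvn, hKHre, hZre]
  have hD := gibbs (fun i => Real.exp (-h i)) lam (fun i => Real.exp_pos _) hlamnn hsum
  have hpos : 0 < ∑ i, Real.exp (-h i) := by
    have : Nonempty n := hne
    exact Finset.sum_pos (fun i _ => Real.exp_pos _) Finset.univ_nonempty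
  calc ∑ i, eta (lam i) - ∑ i, lam i * h i
      = ∑ i, (eta (lam i) + lam i * Real.log (Real.exp (-h i))) := by
        rw [← Finset.sum_sub_distrib]
        apply Finset.sum_congr rfl
        intro i _
        rw [Real.log_exp]
        ring
    _ ≤ Real.log (∑ i, Real.exp (-h i)) := hD
    _ ≤ Real.log (∑ j, Real.exp (-mu j)) := Real.log_le_log hpos hC
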